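/- With I(r) = {b ∈ ℤ[i] : |b| ≥ √2, 1/r ≤ |b| ≤ 2/r, Im b ≥ 1} for 0 < r < 1, one has lim_{r→0⁺} r² · #I(r) = 3π/2. In particular, there exists r₀ > 0 such that r^{−2} ≤ #I(r) ≤ 5·r^{−2} for all 0 < r ≤ r₀. -/

import Mathlib

open Complex MeasureTheory Filter Set
open scoped ENNReal

noncomputable section

/-- The fundamental domain `𝔇 = {x+iy : x,y ∈ [-1/2,1/2)}`. -/
def fund : Set ℂ := {z : ℂ | z.re ∈ Set.Ico (-(1:ℝ)/2) (1/2) ∧ z.im ∈ Set.Ico (-(1:ℝ)/2) (1/2)}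

/-- `𝔇* = 𝔇 \ {0}`. -/
def fundStar : Set ℂ := fund \ {0}

/-- Nearest Gaussian integer `[z]`, the unique Gaussian integer with `z - [z] ∈ 𝔇`. -/
def nearestGauss (z : ℂ) : ℂ :=
  ((⌊z.re + 1/2⌋ : ℤ) : ℂ) + ((⌊z.im + 1/2⌋ : ℤ) : ℂ) * Complex.I

/-- The Hurwitz map `T(z) = 1/z - [1/z]` (with `T 0 = 0`). -/
def hT (z : ℂ) : ℂ := 1/z - nearestGauss (1/z)

/-- HCF partial quotient `a_{n+1}(z) = [1 / T^n(z)]` (0-based index). -/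
def hA (z : ℂ) (n : ℕ) : ℂ := nearestGauss (1 / (hT^[n] z))

/-- `z` is a Gaussian integer. -/
def IsGaussInt (z : ℂ) : Prop := ∃ a b : ℤ, z = (a : ℂ) + (b : ℂ) * Complex.I

/-- The set `I = {a ∈ ℤ[i] : |a| ≥ √2}` of possible partial quotients. -/
def setI : Set ℂ := {a : ℂ | IsGaussInt a ∧ Real.sqrt 2 ≤ ‖a‖}

/-- The matrix `((p(u), p(u⁻)), (q(u), q(u⁻))) = ((0,1),(1,0)) * ∏ ((u_j,1),(1,0))`. -/
def cfMatrix (u : List ℂ) : Matrix (Fin 2) (Fin 2) ℂ :=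
  !![0, 1; 1, 0] * (u.map fun a => !![a, 1; 1, 0]).prod

/-- Continuant numerator `p(u)`. -/
def contP (u : List ℂ) : ℂ := cfMatrix u 0 0

/-- Continuant denominator `q(u)`. -/
def contQ (u : List ℂ) : ℂ := cfMatrix u 1 0

/-- The cylinder `C(u) = {z ∈ 𝔇 : a_1(z) = u_1, …, a_n(z) = u_n}`. -/
def cylinder (u : List ℂ) : Set ℂ :=
  {z ∈ fund | ∀ j : Fin u.length, hA z j = u.get j}

/-- The prototype set `𝔇_u = T^n(C(u))`. -/
def proto (u : List ℂ) : Set ℂ := hT^[u.length] '' cylinder u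

/-- The Möbius transformation `T_u : z ↦ (p(u⁻) z + p(u)) / (q(u⁻) z + q(u))`. -/
def moebiusT (u : List ℂ) (z : ℂ) : ℂ :=
  (cfMatrix u 0 1 * z + cfMatrix u 0 0) / (cfMatrix u 1 1 * z + cfMatrix u 1 0)

/-- `u` is full if `𝔇_u = 𝔇`. -/
def FullSeq (u : List ℂ) : Prop := proto u = fund

/-- `u` is regular if `𝔇_u` has nonempty interior. -/
def RegularSeq (u : List ℂ) : Prop := (interior (proto u)).Nonempty

/-- The length of the (finite) HCF expansion of a Gaussian rational `w ∈ 𝔇*`: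
the least `N` with `T^N(w) = 0`. -/
def hcfLength (w : ℂ) : ℕ := sInf {N : ℕ | hT^[N] w = 0}

/-- `dd(z, w)`: the number of indices `1 ≤ n ≤ N` where the HCF partial quotients of `z`
and of the Gaussian rational `w` (with expansion of length `N`) differ. -/
def ddiff (z w : ℂ) : ℕ := {n : ℕ | n < hcfLength w ∧ hA z n ≠ hA w n}.ncard

/-- The sequence `v_k = (3, -2i)` followed by `k` repetitions of `(-2, 2i, -2, -2i)`. -/
def vSeq (k : ℕ) : List ℂ :=
  [3, -2*Complex.I] ++ (List.replicate k [-2, 2*Complex.I, -2, -2*Complex.I]).flatten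

/-- The sequence `ṽ_k = (3+i, 2i)` followed by `k` repetitions of `(-2+i, 2i, -2+i, 2i)`. -/
def vtSeq (k : ℕ) : List ℂ :=
  [3+Complex.I, 2*Complex.I] ++
    (List.replicate k [-2+Complex.I, 2*Complex.I, -2+Complex.I, 2*Complex.I]).flatten

/-- The lower order `λ(ψ) = liminf_{x→∞} (-log ψ(x)) / log x`, valued in `ℝ≥0∞`. -/
def lambdaPsi (ψ : ℝ → ℝ) : ℝ≥0∞ :=
  Filter.liminf (fun x : ℝ => ENNReal.ofReal (-Real.log (ψ x) / Real.log x)) Filter.atTop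

/-- The set `E(ψ)` of `z ∈ 𝔇*` admitting infinitely many Gaussian rational approximations
`p/q` with `|z - p/q| ≤ ψ(|q|)` whose HCF expansions differ from that of `z` in more and
more places. -/
def Epsi (ψ : ℝ → ℝ) : Set ℂ :=
  {z : ℂ | z ∈ fundStar ∧ ∃ p q : ℕ → ℂ,
    (∀ n, IsGaussInt (p n) ∧ IsGaussInt (q n) ∧ q n ≠ 0 ∧
      ‖z - p n / q n‖ ≤ ψ ‖q n‖) ∧
    Function.Injective (fun n => p n / q n) ∧
    Filter.Tendsto (fun n => ddiff z (p n / q n)) Filter.atTop Filter.atTop}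

/-- The `ψ`-approximable set `W(ψ)`. -/
def Wpsi (ψ : ℝ → ℝ) : Set ℂ :=
  {z : ℂ | z ∈ fundStar ∧ {pq : ℂ × ℂ | IsGaussInt pq.1 ∧ IsGaussInt pq.2 ∧ pq.2 ≠ 0 ∧
    ‖z - pq.1 / pq.2‖ ≤ ψ ‖pq.2‖}.Infinite}

end

/-- `I(r) = {b ∈ ℤ[i] : |b| ≥ √2, 1/r ≤ |b| ≤ 2/r, Im b ≥ 1}`. -/
def setIr (r : ℝ) : Set ℂ :=
  {b : ℂ | IsGaussInt b ∧ Real.sqrt 2 ≤ ‖b‖ ∧ 1/r ≤ ‖b‖ ∧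
    ‖b‖ ≤ 2/r ∧ 1 ≤ b.im}


noncomputable section AuxCount

def Hh : Set ℂ := {z : ℂ | 0 ≤ z.im}

lemma mp_conj : MeasurePreserving (starRingEnd ℂ) (volume : Measure ℂ) volume :=
  Complex.conjLIE.measurePreserving

lemma vol_im_zero : volume {z : ℂ | z.im = 0} = 0 := by
  have h : {z : ℂ | z.im = 0} = Complex.measurableEquivRealProd ⁻¹' (Set.univ ×ˢ ({0} : Set ℝ)) := by
    ext z
    simp [Complex.measurableEquivRealProd_apply, eq_comm]
  rw [h, Complex.volume_preserving_equiv_real_prod.measure_preimage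
    (MeasurableSet.univ.prod (measurableSet_singleton 0)).nullMeasurableSet]
  rw [show (volume : Measure (ℝ × ℝ)) = (volume : Measure ℝ).prod volume from rfl, Measure.prod_prod]
  simp

lemma two_vol_inter_H (s : Set ℂ) (hs : MeasurableSet s)
    (hsym : (starRingEnd ℂ) ⁻¹' s = s) :
    2 * volume (s ∩ Hh) = volume s := by
  have hH : MeasurableSet Hh := measurableSet_le measurable_const Complex.measurable_im
  have hHc : MeasurableSet {z : ℂ | z.im ≤ 0} := measurableSet_le Complex.measurable_im measurable_const
  have h1 : volume (s ∩ Hh) = volume (s ∩ {z : ℂ | z.im ≤ 0}) := by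
    have : (starRingEnd ℂ) ⁻¹' (s ∩ {z : ℂ | z.im ≤ 0}) = s ∩ Hh := by
      rw [Set.preimage_inter, hsym]
      congr 1
      ext z
      simp [Hh, Complex.conj_im, neg_le, neg_zero]
    rw [← this, mp_conj.measure_preimage ((hs.inter hHc).nullMeasurableSet)]
  have h2 : volume ((s ∩ Hh) ∪ (s ∩ {z : ℂ | z.im ≤ 0})) +
      volume ((s ∩ Hh) ∩ (s ∩ {z : ℂ | z.im ≤ 0})) =
      volume (s ∩ Hh) + volume (s ∩ {z : ℂ | z.im ≤ 0}) :=
    measure_union_add_inter _ (hs.inter hHc)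
  have hu : (s ∩ Hh) ∪ (s ∩ {z : ℂ | z.im ≤ 0}) = s := by
    ext z; constructor
    · rintro (⟨h, _⟩ | ⟨h, _⟩) <;> exact h
    · intro h
      rcases le_total 0 z.im with h' | h'
      · exact Or.inl ⟨h, h'⟩
      · exact Or.inr ⟨h, h'⟩
  have hi : volume ((s ∩ Hh) ∩ (s ∩ {z : ℂ | z.im ≤ 0})) = 0 := by
    refine measure_mono_null ?_ vol_im_zero
    rintro z ⟨⟨_, h1⟩, ⟨_, h2⟩⟩
    exact le_antisymm h2 h1
  rw [hu, hi, add_zero] at h2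
  rw [two_mul, h2, h1]

lemma vol_ball_H (a : ℝ) (ha : 0 ≤ a) :
    volume (Metric.ball (0:ℂ) a ∩ Hh) = ENNReal.ofReal (Real.pi * a^2 / 2) := by
  have hsym : (starRingEnd ℂ) ⁻¹' Metric.ball (0:ℂ) a = Metric.ball 0 a := by
    ext z
    simp only [Set.mem_preimage, Metric.mem_ball, Complex.dist_eq, sub_zero]
    rw [Complex.norm_conj]
  have h := two_vol_inter_H _ measurableSet_ball hsym
  rw [Complex.volume_ball] at h
  have h2 : (ENNReal.ofReal a) ^ 2 * (NNReal.pi : ℝ≥0∞) = ENNReal.ofReal (a ^ 2 * Real.pi) := by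
    rw [← ENNReal.ofReal_pow ha, ← ENNReal.ofReal_coe_nnreal, ← ENNReal.ofReal_mul (by positivity)]
    norm_num
  rw [h2] at h
  have : (2:ℝ≥0∞) * ENNReal.ofReal (Real.pi * a^2 / 2) = ENNReal.ofReal (a ^ 2 * Real.pi) := by
    rw [← ENNReal.ofReal_ofNat, ← ENNReal.ofReal_mul (by norm_num)]
    congr 1
    ring
  rw [← this] at h
  have h4 : (2:ℝ≥0∞) ≠ 0 := by norm_num
  have h5 : (2:ℝ≥0∞) ≠ ∞ := by norm_num
  calc volume _ = 2⁻¹ * (2 * volume _) := by rw [← mul_assoc, ENNReal.inv_mul_cancel h4 h5, one_mul]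
  _ = 2⁻¹ * (2 * ENNReal.ofReal (Real.pi * a^2/2)) := by rw [h]
  _ = ENNReal.ofReal (Real.pi * a^2/2) := by rw [← mul_assoc, ENNReal.inv_mul_cancel h4 h5, one_mul]

lemma vol_cball_H (a : ℝ) (ha : 0 ≤ a) :
    volume (Metric.closedBall (0:ℂ) a ∩ Hh) = ENNReal.ofReal (Real.pi * a^2 / 2) := by
  have hsym : (starRingEnd ℂ) ⁻¹' Metric.closedBall (0:ℂ) a = Metric.closedBall 0 a := by
    ext z
    simp only [Set.mem_preimage, Metric.mem_closedBall, Complex.dist_eq, sub_zero]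
    rw [Complex.norm_conj]
  have h := two_vol_inter_H _ measurableSet_closedBall hsym
  rw [Complex.volume_closedBall] at h
  have h2 : (ENNReal.ofReal a) ^ 2 * (NNReal.pi : ℝ≥0∞) = ENNReal.ofReal (a ^ 2 * Real.pi) := by
    rw [← ENNReal.ofReal_pow ha, ← ENNReal.ofReal_coe_nnreal, ← ENNReal.ofReal_mul (by positivity)]
    norm_num
  rw [h2] at h
  have : (2:ℝ≥0∞) * ENNReal.ofReal (Real.pi * a^2 / 2) = ENNReal.ofReal (a ^ 2 * Real.pi) := by
    rw [← ENNReal.ofReal_ofNat, ← ENNReal.ofReal_mul (by norm_num)]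
    congr 1
    ring
  rw [← this] at h
  have h4 : (2:ℝ≥0∞) ≠ 0 := by norm_num
  have h5 : (2:ℝ≥0∞) ≠ ∞ := by norm_num
  calc volume _ = 2⁻¹ * (2 * volume _) := by rw [← mul_assoc, ENNReal.inv_mul_cancel h4 h5, one_mul]
  _ = 2⁻¹ * (2 * ENNReal.ofReal (Real.pi * a^2/2)) := by rw [h]
  _ = ENNReal.ofReal (Real.pi * a^2/2) := by rw [← mul_assoc, ENNReal.inv_mul_cancel h4 h5, one_mul]

/-- half annulus -/
lemma vol_halfAnn (a b : ℝ) (ha : 0 ≤ a) (hab : a ≤ b) :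
    volume ((Metric.closedBall (0:ℂ) b \ Metric.ball 0 a) ∩ Hh) =
      ENNReal.ofReal (Real.pi / 2 * (b^2 - a^2)) := by
  have hH : MeasurableSet Hh := measurableSet_le measurable_const Complex.measurable_im
  have hdisj : Disjoint (Metric.ball (0:ℂ) a ∩ Hh) ((Metric.closedBall (0:ℂ) b \ Metric.ball 0 a) ∩ Hh) := by
    refine Set.disjoint_left.2 ?_
    rintro z ⟨hz, _⟩ ⟨⟨_, hz'⟩, _⟩
    exact hz' hz
  have hun : (Metric.ball (0:ℂ) a ∩ Hh) ∪ ((Metric.closedBall (0:ℂ) b \ Metric.ball 0 a) ∩ Hh) =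
      Metric.closedBall (0:ℂ) b ∩ Hh := by
    rw [← Set.union_inter_distrib_right]
    congr 1
    rw [Set.union_diff_self]
    exact Set.union_eq_self_of_subset_left (Metric.ball_subset_closedBall.trans
      (Metric.closedBall_subset_closedBall hab))
  have := measure_union (μ := volume) hdisj ((measurableSet_closedBall.diff measurableSet_ball).inter hH)
  rw [hun] at this
  rw [vol_ball_H a ha, vol_cball_H b (ha.trans hab)] at this
  have hres : ENNReal.ofReal (Real.pi * b^2/2) = ENNReal.ofReal (Real.pi * a^2/2) + ENNReal.ofReal (Real.pi/2*(b^2-a^2)) := by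
    rw [← ENNReal.ofReal_add (by positivity) (by nlinarith [Real.pi_pos, mul_nonneg (sub_nonneg.2 hab) (by linarith : (0:ℝ) ≤ b + a)])]
    congr 1
    ring
  rw [hres] at this
  exact (ENNReal.add_right_inj (by norm_num)).1 this.symm


def egz (p : ℤ × ℤ) : ℂ := (p.1 : ℂ) + (p.2 : ℂ) * Complex.I

@[simp] lemma egz_re (p : ℤ × ℤ) : (egz p).re = p.1 := by simp [egz]
@[simp] lemma egz_im (p : ℤ × ℤ) : (egz p).im = p.2 := by simp [egz]

lemma egz_inj : Function.Injective egz := by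
  intro p q h
  have h1 := congrArg Complex.re h
  have h2 := congrArg Complex.im h
  simp only [egz_re, egz_im, Int.cast_injective.eq_iff] at h1 h2
  exact Prod.ext h1 h2

def Qsq (p : ℤ × ℤ) : Set ℂ :=
  {z : ℂ | z.re ∈ Set.Ico ((p.1 : ℝ) - 1/2) ((p.1 : ℝ) + 1/2) ∧
           z.im ∈ Set.Ico ((p.2 : ℝ) - 1/2) ((p.2 : ℝ) + 1/2)}

lemma vol_reim (A B : Set ℝ) (hA : MeasurableSet A) (hB : MeasurableSet B) :
    volume {z : ℂ | z.re ∈ A ∧ z.im ∈ B} = volume A * volume B := by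
  have h : {z : ℂ | z.re ∈ A ∧ z.im ∈ B} = Complex.measurableEquivRealProd ⁻¹' (A ×ˢ B) := by
    ext z; simp [Complex.measurableEquivRealProd_apply]
  rw [h, Complex.volume_preserving_equiv_real_prod.measure_preimage (hA.prod hB).nullMeasurableSet,
    show (volume : Measure (ℝ × ℝ)) = (volume : Measure ℝ).prod volume from rfl, Measure.prod_prod]

lemma vol_Qsq (p : ℤ × ℤ) : volume (Qsq p) = 1 := by
  rw [Qsq, vol_reim _ _ measurableSet_Ico measurableSet_Ico]
  rw [Real.volume_Ico, Real.volume_Ico]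
  norm_num

lemma measurableSet_Qsq (p : ℤ × ℤ) : MeasurableSet (Qsq p) :=
  (Complex.measurable_re measurableSet_Ico).inter (Complex.measurable_im measurableSet_Ico)

lemma mem_Qsq_iff {p : ℤ × ℤ} {z : ℂ} :
    z ∈ Qsq p ↔ p.1 = ⌊z.re + 1/2⌋ ∧ p.2 = ⌊z.im + 1/2⌋ := by
  constructor
  · rintro ⟨⟨h1, h2⟩, ⟨h3, h4⟩⟩
    constructor
    · symm; rw [Int.floor_eq_iff]
      refine ⟨by linarith, by push_cast; linarith⟩
    · symm; rw [Int.floor_eq_iff]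
      refine ⟨by linarith, by push_cast; linarith⟩
  · rintro ⟨h1, h2⟩
    have b1 := Int.floor_le (z.re + 1/2)
    have b2 := Int.lt_floor_add_one (z.re + 1/2)
    have b3 := Int.floor_le (z.im + 1/2)
    have b4 := Int.lt_floor_add_one (z.im + 1/2)
    rw [← h1] at b1 b2; rw [← h2] at b3 b4
    exact ⟨⟨by linarith, by linarith⟩, ⟨by linarith, by linarith⟩⟩

lemma Qsq_disjoint : Pairwise (Function.onFun Disjoint Qsq) := by
  intro p q hpq
  refine Set.disjoint_left.2 fun z hp hq => hpq ?_
  rw [mem_Qsq_iff] at hp hq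
  exact Prod.ext (hp.1.trans hq.1.symm) (hp.2.trans hq.2.symm)

lemma abs_sub_egz {p : ℤ × ℤ} {z : ℂ} (h : z ∈ Qsq p) : ‖z - egz p‖ ≤ 1 := by
  obtain ⟨⟨h1, h2⟩, ⟨h3, h4⟩⟩ := h
  calc ‖z - egz p‖ ≤ |(z - egz p).re| + |(z - egz p).im| :=
        Complex.norm_le_abs_re_add_abs_im _
  _ ≤ 1 := by
      simp only [Complex.sub_re, Complex.sub_im, egz_re, egz_im]
      have a1 : |z.re - (p.1:ℝ)| ≤ 1/2 := abs_le.2 ⟨by linarith, by linarith⟩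
      have a2 : |z.im - (p.2:ℝ)| ≤ 1/2 := abs_le.2 ⟨by linarith, by linarith⟩
      linarith


lemma count_bounds (r : ℝ) (hr0 : 0 < r) (hr : r ≤ 1/2) :
    Real.pi/2 * ((2/r-1)^2 - (1/r+1)^2) - 6/r ≤ ((setIr r).ncard : ℝ) ∧
    ((setIr r).ncard : ℝ) ≤ Real.pi/2 * ((2/r+1)^2 - (1/r-1)^2) := by
  have hrinv : (2:ℝ) ≤ 1/r := by
    rw [le_div_iff₀ hr0]; linarith
  have h1rpos : (0:ℝ) < 1/r := by positivity
  have h2r : 2/r = 2*(1/r) := by ring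
  have hS : setIr r ⊆ Set.range egz := by
    rintro b ⟨⟨m, n, rfl⟩, -⟩
    exact ⟨(m, n), rfl⟩
  set S : Set (ℤ × ℤ) := egz ⁻¹' setIr r with hSdef
  have himg : egz '' S = setIr r := Set.image_preimage_eq_of_subset hS
  have habs_mem : ∀ p ∈ S, ‖egz p‖ ≤ 2/r := fun p hp => hp.2.2.2.1
  have hfin : S.Finite := by
    set M : ℤ := ⌈2/r⌉
    refine Set.Finite.subset (Set.Finite.prod (Set.finite_Icc (-M) M) (Set.finite_Icc (-M) M)) ?_
    rintro ⟨m, n⟩ hp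
    have h1 : |(m:ℝ)| ≤ 2/r := le_trans (by simpa using abs_re_le_norm (egz (m,n))) (habs_mem _ hp)
    have h2 : |(n:ℝ)| ≤ 2/r := le_trans (by simpa using abs_im_le_norm (egz (m,n))) (habs_mem _ hp)
    have hM := Int.le_ceil (2/r)
    rw [abs_le] at h1 h2
    have e1 : -M ≤ m := by rw [← @Int.cast_le ℝ]; push_cast; linarith [h1.1]
    have e2 : m ≤ M := by rw [← @Int.cast_le ℝ]; push_cast; linarith [h1.2]
    have e3 : -M ≤ n := by rw [← @Int.cast_le ℝ]; push_cast; linarith [h2.1]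
    have e4 : n ≤ M := by rw [← @Int.cast_le ℝ]; push_cast; linarith [h2.2]
    exact ⟨⟨e1, e2⟩, e3, e4⟩
  have hcard : ((setIr r).ncard : ℝ) = (hfin.toFinset.card : ℝ) := by
    rw [← himg, Set.ncard_image_of_injective _ egz_inj, Set.ncard_eq_toFinset_card _ hfin]
  -- volume of the union of unit squares
  have hvolU : volume (⋃ p ∈ hfin.toFinset, Qsq p) = (hfin.toFinset.card : ℝ≥0∞) := by
    rw [measure_biUnion_finset (fun p _ q _ h => Qsq_disjoint h) (fun p _ => measurableSet_Qsq p)]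
    simp [vol_Qsq]
  -- upper bound
  have hupper : volume (⋃ p ∈ hfin.toFinset, Qsq p) ≤
      ENNReal.ofReal (Real.pi/2 * ((2/r+1)^2 - (1/r-1)^2)) := by
    rw [← vol_halfAnn (1/r-1) (2/r+1) (by linarith) (by linarith)]
    refine measure_mono ?_
    rintro z hz
    simp only [Set.mem_iUnion] at hz
    obtain ⟨p, hpF, hzp⟩ := hz
    have hpS : p ∈ S := by rwa [Set.Finite.mem_toFinset] at hpF
    obtain ⟨-, -, hge, hle, him⟩ := hpS
    have hd := abs_sub_egz hzp
    have habs1 : ‖z‖ ≤ 2/r + 1 := by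
      calc ‖z‖ ≤ ‖egz p‖ + ‖z - egz p‖ := by
            simpa using norm_add_le (egz p) (z - egz p)
      _ ≤ 2/r + 1 := add_le_add hle hd
    have habs2 : 1/r - 1 ≤ ‖z‖ := by
      have h0 : ‖egz p‖ - ‖z‖ ≤ ‖z - egz p‖ := by
        have := abs_norm_sub_norm_le (egz p) z
        have h1 := abs_le.1 this
        rw [norm_sub_rev (egz p) z] at h1
        linarith [h1.1, h1.2]
      linarith
    refine ⟨⟨?_, ?_⟩, ?_⟩
    · rw [Metric.mem_closedBall, Complex.dist_eq, sub_zero]; exact habs1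
    · rw [Metric.mem_ball, Complex.dist_eq, sub_zero]; push_neg; exact habs2
    · have hp2 : (1:ℝ) ≤ (p.2:ℝ) := by simpa using him
      have := hzp.2.1
      simp only [Hh, Set.mem_setOf_eq]
      linarith
  -- lower bound
  have hlower : ENNReal.ofReal (Real.pi/2 * ((2/r-1)^2 - (1/r+1)^2)) ≤
      volume (⋃ p ∈ hfin.toFinset, Qsq p) + ENNReal.ofReal (6/r) := by
    have hstrip : volume {z : ℂ | z.re ∈ Set.Icc (-(2/r)) (2/r) ∧ z.im ∈ Set.Ico 0 (3/2)} =
        ENNReal.ofReal (6/r) := by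
      rw [vol_reim _ _ measurableSet_Icc measurableSet_Ico, Real.volume_Icc, Real.volume_Ico,
        show (2/r - -(2/r)) = 4/r by ring, show ((3:ℝ)/2 - 0) = 3/2 by norm_num,
        ← ENNReal.ofReal_mul (by positivity)]
      congr 1
      field_simp
      ring
    rw [← vol_halfAnn (1/r+1) (2/r-1) (by linarith) (by linarith), ← hstrip]
    refine le_trans (measure_mono ?_) (measure_union_le _ _)
    rintro z ⟨⟨hcb, hnb⟩, hH⟩
    rw [Metric.mem_closedBall, Complex.dist_eq, sub_zero] at hcb
    rw [Metric.mem_ball, Complex.dist_eq, sub_zero, not_lt] at hnb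
    rcases lt_or_ge z.im (3/2) with him | him
    · right
      have h' := abs_le.1 (le_trans (abs_re_le_norm z) hcb : |z.re| ≤ 2/r-1)
      exact ⟨⟨by linarith [h'.1], by linarith [h'.2]⟩, hH, him⟩
    · left
      simp only [Set.mem_iUnion]
      refine ⟨(⌊z.re + 1/2⌋, ⌊z.im + 1/2⌋), ?_, mem_Qsq_iff.2 ⟨rfl, rfl⟩⟩
      rw [Set.Finite.mem_toFinset]
      have hzQ : z ∈ Qsq (⌊z.re + 1/2⌋, ⌊z.im + 1/2⌋) := mem_Qsq_iff.2 ⟨rfl, rfl⟩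
      have hd := abs_sub_egz hzQ
      set p := ((⌊z.re + 1/2⌋ : ℤ), (⌊z.im + 1/2⌋ : ℤ))
      have habs1 : ‖egz p‖ ≤ 2/r := by
        calc ‖egz p‖ ≤ ‖z‖ + ‖egz p - z‖ := by
              simpa using norm_add_le z (egz p - z)
        _ = ‖z‖ + ‖z - egz p‖ := by rw [norm_sub_rev]
        _ ≤ (2/r - 1) + 1 := add_le_add hcb hd
        _ = 2/r := by ring
      have habs2 : 1/r ≤ ‖egz p‖ := by
        have h1 := abs_le.1 (abs_norm_sub_norm_le z (egz p))
        linarith [h1.1, h1.2]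
      have him' : (1:ℝ) ≤ (egz p).im := by
        rw [egz_im]
        have : (1:ℤ) ≤ ⌊z.im + 1/2⌋ := Int.le_floor.2 (by push_cast; linarith)
        exact_mod_cast this
      refine ⟨⟨p.1, p.2, rfl⟩, ?_, by linarith, habs1, him'⟩
      calc Real.sqrt 2 ≤ 2 := by
            nlinarith [Real.sq_sqrt (by norm_num : (0:ℝ) ≤ 2), Real.sqrt_nonneg 2]
      _ ≤ ‖egz p‖ := le_trans hrinv habs2
  constructor
  · rw [hcard]
    have := hlower
    rw [hvolU, ← ENNReal.ofReal_natCast, ← ENNReal.ofReal_add (by positivity) (by positivity)] at this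
    have h2 := (ENNReal.ofReal_le_ofReal_iff (by positivity)).1 this
    linarith
  · rw [hcard]
    have := le_trans (le_of_eq hvolU.symm) hupper
    rw [← ENNReal.ofReal_natCast] at this
    have hnn : (0:ℝ) ≤ Real.pi/2 * ((2/r+1)^2 - (1/r-1)^2) := by
      nlinarith [Real.pi_pos, sq_nonneg (2/r+1), sq_nonneg (1/r-1),
        mul_nonneg (by linarith : (0:ℝ) ≤ (2/r+1) - (1/r-1)) (by linarith : (0:ℝ) ≤ (2/r+1) + (1/r-1))]
    exact (ENNReal.ofReal_le_ofReal_iff hnn).1 this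

end AuxCount

theorem card_setIr_asymptotics :
    Filter.Tendsto (fun r : ℝ => r^2 * ((setIr r).ncard : ℝ))
      (nhdsWithin 0 (Set.Ioi 0)) (nhds (3 * Real.pi / 2)) ∧
    ∃ r₀ : ℝ, 0 < r₀ ∧ ∀ r : ℝ, 0 < r → r ≤ r₀ →
      1 / r^2 ≤ ((setIr r).ncard : ℝ) ∧ ((setIr r).ncard : ℝ) ≤ 5 / r^2 := by
  have key : ∀ r : ℝ, 0 < r → r ≤ 1/2 →
      Real.pi/2 * ((2-r)^2 - (1+r)^2) - 6*r ≤ r^2 * ((setIr r).ncard : ℝ) ∧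
      r^2 * ((setIr r).ncard : ℝ) ≤ Real.pi/2 * ((2+r)^2 - (1-r)^2) := by
    intro r hr0 hr
    obtain ⟨hlo, hhi⟩ := count_bounds r hr0 hr
    have hr2 : (0:ℝ) < r^2 := by positivity
    constructor
    · have h := mul_le_mul_of_nonneg_left hlo hr2.le
      calc Real.pi/2 * ((2-r)^2 - (1+r)^2) - 6*r
          = r^2 * (Real.pi/2 * ((2/r-1)^2 - (1/r+1)^2) - 6/r) := by
            field_simp
      _ ≤ r^2 * ((setIr r).ncard : ℝ) := h
    · have h := mul_le_mul_of_nonneg_left hhi hr2.le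
      calc r^2 * ((setIr r).ncard : ℝ)
          ≤ r^2 * (Real.pi/2 * ((2/r+1)^2 - (1/r-1)^2)) := h
      _ = Real.pi/2 * ((2+r)^2 - (1-r)^2) := by
            field_simp
  have hmem : Set.Ioc (0:ℝ) (1/2) ∈ nhdsWithin (0:ℝ) (Set.Ioi 0) :=
    Ioc_mem_nhdsGT_of_mem (by norm_num : (0:ℝ) ∈ Set.Ico (0:ℝ) (1/2))
  have hlo_tendsto : Filter.Tendsto (fun r : ℝ => Real.pi/2 * ((2-r)^2 - (1+r)^2) - 6*r)
      (nhdsWithin 0 (Set.Ioi 0)) (nhds (3 * Real.pi / 2)) := by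
    have hc : Continuous (fun r : ℝ => Real.pi/2 * ((2-r)^2 - (1+r)^2) - 6*r) := by continuity
    have := (hc.tendsto 0).mono_left (nhdsWithin_le_nhds (s := Set.Ioi 0))
    convert this using 2
    norm_num
    ring
  have hhi_tendsto : Filter.Tendsto (fun r : ℝ => Real.pi/2 * ((2+r)^2 - (1-r)^2))
      (nhdsWithin 0 (Set.Ioi 0)) (nhds (3 * Real.pi / 2)) := by
    have hc : Continuous (fun r : ℝ => Real.pi/2 * ((2+r)^2 - (1-r)^2)) := by continuity
    have := (hc.tendsto 0).mono_left (nhdsWithin_le_nhds (s := Set.Ioi 0))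
    convert this using 2
    norm_num
    ring
  have hT : Filter.Tendsto (fun r : ℝ => r^2 * ((setIr r).ncard : ℝ))
      (nhdsWithin 0 (Set.Ioi 0)) (nhds (3 * Real.pi / 2)) := by
    refine tendsto_of_tendsto_of_tendsto_of_le_of_le' hlo_tendsto hhi_tendsto ?_ ?_
    · filter_upwards [hmem] with r hr
      exact (key r hr.1 hr.2).1
    · filter_upwards [hmem] with r hr
      exact (key r hr.1 hr.2).2
  refine ⟨hT, ?_⟩
  have hpi1 := Real.pi_gt_three
  have hpi2 := Real.pi_lt_d2
  set ε : ℝ := 5 - 3 * Real.pi / 2 with hε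
  have hεpos : 0 < ε := by rw [hε]; nlinarith
  have hev : ∀ᶠ r in nhdsWithin (0:ℝ) (Set.Ioi 0),
      r^2 * ((setIr r).ncard : ℝ) ∈ Set.Ioo (3 * Real.pi / 2 - ε) (3 * Real.pi / 2 + ε) :=
    hT (Ioo_mem_nhds (by linarith) (by linarith))
  obtain ⟨δ, hδpos, hδ⟩ := (nhdsGT_basis (0:ℝ)).eventually_iff.1 hev
  refine ⟨δ/2, by linarith, fun r hr0 hrδ => ?_⟩
  have hrI : r ∈ Set.Ioo (0:ℝ) δ := ⟨hr0, by linarith⟩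
  have h := hδ hrI
  have hr2 : (0:ℝ) < r^2 := by positivity
  obtain ⟨hl, hu⟩ := h
  constructor
  · rw [div_le_iff₀ hr2]
    have : (1:ℝ) ≤ 3 * Real.pi / 2 - ε := by rw [hε]; nlinarith
    calc (1:ℝ) ≤ 3 * Real.pi / 2 - ε := this
    _ ≤ r^2 * ((setIr r).ncard : ℝ) := hl.le
    _ = ((setIr r).ncard : ℝ) * r^2 := by ring
  · rw [le_div_iff₀ hr2]
    have : 3 * Real.pi / 2 + ε = 5 := by rw [hε]; ring
    calc ((setIr r).ncard : ℝ) * r^2 = r^2 * ((setIr r).ncard : ℝ) := by ring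
    _ ≤ 3 * Real.pi / 2 + ε := hu.le
    _ = 5 := this
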